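/- Let G be a finite group. Then μ_2(G) is finite and is realized by some algebraic 2-complex: there exists an exact sequence F_2 → F_1 → F_0 → ℤ → 0 of finitely generated free ℤG-modules with f_2 − f_1 + f_0 = μ_2(G); equivalently, the infimum defining μ_2(G) is attained and μ_2(G) > −∞. -/

import Mathlib

/-- The integral group ring `ℤG`. -/
abbrev ZG (G : Type*) [Group G] := MonoidAlgebra ℤ G

/-- `ℤ` as the trivial `ℤG`-module. -/
abbrev TrivInt (G : Type*) [Group G] := (Representation.trivial ℤ (G := G) (V := ℤ)).asModule

/-- An algebraic 2-complex over `ℤG`: an exact sequence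
`F₂ → F₁ → F₀ → ℤ → 0` of finitely generated free `ℤG`-modules
(in standard form, `Fᵢ = (ℤG)^{fᵢ}`), with `ℤ` the trivial module. -/
structure AlgTwoComplex (G : Type*) [Group G] where
  f0 : ℕ
  f1 : ℕ
  f2 : ℕ
  d1 : (Fin f2 → ZG G) →ₗ[ZG G] (Fin f1 → ZG G)
  d0 : (Fin f1 → ZG G) →ₗ[ZG G] (Fin f0 → ZG G)
  ε : (Fin f0 → ZG G) →ₗ[ZG G] TrivInt G
  surj : Function.Surjective ε
  exact0 : LinearMap.range d0 = LinearMap.ker ε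
  exact1 : LinearMap.range d1 = LinearMap.ker d0

/-- The partial Euler characteristic `μ₂(F) = f₂ - f₁ + f₀` of an algebraic 2-complex. -/
def AlgTwoComplex.mu2 {G : Type*} [Group G] (F : AlgTwoComplex G) : ℤ :=
  (F.f2 : ℤ) - F.f1 + F.f0

/-- The set of partial Euler characteristics of algebraic 2-complexes over `ℤG`;
`μ₂(G)` is its infimum. -/
def mu2Set (G : Type*) [Group G] : Set ℤ := {z | ∃ F : AlgTwoComplex G, F.mu2 = z}

/-- `G` admits a finite presentation with `d` generators and `k` relators. -/
def Presents (G : Type*) [Group G] (d k : ℕ) : Prop :=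
  ∃ t : Fin k → FreeGroup (Fin d), Nonempty (G ≃* PresentedGroup (Set.range t))

/-- The set of values `d - k` over finite presentations of `G`;
the deficiency `def(G)` is its supremum. -/
def defSet (G : Type*) [Group G] : Set ℤ :=
  {z | ∃ d k : ℕ, Presents G d k ∧ z = (d : ℤ) - k}

attribute [local instance 2000] Submodule.module

section Aux

/-- Any additive monoid hom between `ℤ`-modules, made `ℤ`-linear. -/
def zmap {M N : Type*} [AddCommGroup M] [AddCommGroup N] [Module ℤ M] [Module ℤ N]
    (f : M →+ N) : M →ₗ[ℤ] N where
  toFun := f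
  map_add' := map_add f
  map_smul' z x := by
    have := map_intCast_smul f ℤ ℤ z x
    simpa using this

variable {G : Type*} [Group G] [Finite G]

instance zgFree : Module.Free ℤ (ZG G) := inferInstance

instance zgFinite : Module.Finite ℤ (ZG G) := by
  haveI := Fintype.ofFinite G
  exact inferInstance

instance zgNZSD : NoZeroSMulDivisors ℤ (ZG G) :=
  Function.Injective.noZeroSMulDivisors MonoidAlgebra.coeff MonoidAlgebra.coeff_injective rfl
    (fun _ _ => rfl)

/-- Rank-nullity in `finrank` form over `ℤ`, for a map out of a finite module. -/
theorem zRankNullity {M : Type*} {N : Type*} [AddCommGroup M] [Module ℤ M]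
    [Module.Finite ℤ M] [AddCommGroup N] [Module ℤ N] (f : M →ₗ[ℤ] N) :
    Module.finrank ℤ (LinearMap.range f) + Module.finrank ℤ (LinearMap.ker f)
      = Module.finrank ℤ M := by
  haveI := Module.Finite.iff_fg.mpr (IsNoetherian.noetherian (LinearMap.ker f))
  haveI := Module.Finite.range f
  have h := LinearMap.lift_rank_range_add_rank_ker f
  have h2 := congrArg Cardinal.toNat h
  rwa [Cardinal.toNat_add (Cardinal.lift_lt_aleph0.2 (Module.rank_lt_aleph0 ℤ _))
      (Cardinal.lift_lt_aleph0.2 (Module.rank_lt_aleph0 ℤ _)),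
    Cardinal.toNat_lift, Cardinal.toNat_lift, Cardinal.toNat_lift] at h2

/-- A finitely generated submodule is the range of a map from a finite free module. -/
theorem exists_free_cover {R M : Type*} [Ring R] [AddCommGroup M] [Module R M]
    (p : Submodule R M) [Module.Finite R p] :
    ∃ (n : ℕ) (φ : (Fin n → R) →ₗ[R] M), LinearMap.range φ = p := by
  obtain ⟨n, f, hf⟩ := Module.Finite.exists_fin' R p
  refine ⟨n, p.subtype.comp f, ?_⟩
  rw [LinearMap.range_comp, LinearMap.range_eq_top.2 hf, Submodule.map_top,
    Submodule.range_subtype]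

end Aux

set_option maxHeartbeats 1000000 in
/-- **Lemma 4.1 for finite groups.**  For a finite group `G`, `μ₂(G)` is finite
(`μ₂(G) > -∞`, i.e. the set of partial Euler characteristics of algebraic
2-complexes is nonempty and bounded below) and the infimum is attained by some
algebraic 2-complex. -/
theorem mu2_finite_and_realized
    (G : Type*) [Group G] [Finite G] :
    (mu2Set G).Nonempty ∧ BddBelow (mu2Set G) ∧
      ∃ F : AlgTwoComplex G, F.mu2 = sInf (mu2Set G) := by
  classical
  -- ### Part 1: `mu2Set G` is nonempty
  have hne : (mu2Set G).Nonempty := by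
    haveI : IsNoetherian ℤ (Fin 1 → ZG G) := inferInstance
    -- the augmentation map
    set one' : TrivInt G := (Representation.trivial ℤ (G := G) (V := ℤ)).asModuleEquiv.symm 1
      with hone
    set ε : (Fin 1 → ZG G) →ₗ[ZG G] TrivInt G :=
      (LinearMap.toSpanSingleton (ZG G) (TrivInt G) one').comp (LinearMap.proj 0) with hε
    have key : ∀ m : ℤ, (MonoidAlgebra.single (1 : G) m) • one' =
        (Representation.trivial ℤ (G := G) (V := ℤ)).asModuleEquiv.symm m := by
      intro m
      apply_fun (Representation.trivial ℤ (G := G) (V := ℤ)).asModuleEquiv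
        using (LinearEquiv.injective _)
      rw [Representation.asModuleEquiv_map_smul]
      simp [hone, Representation.asAlgebraHom_single, Representation.trivial_apply]
    have hsurj : Function.Surjective ε := by
      intro m
      refine ⟨fun _ => MonoidAlgebra.single (1 : G)
        ((Representation.trivial ℤ (G := G) (V := ℤ)).asModuleEquiv m), ?_⟩
      simp only [hε, LinearMap.comp_apply, LinearMap.proj_apply,
        LinearMap.toSpanSingleton_apply]
      rw [key]
      simp
    -- kernel of ε
    haveI : IsNoetherian (ZG G) (Fin 1 → ZG G) := isNoetherian_of_tower ℤ inferInstance
    haveI : Module.Finite (ZG G) (LinearMap.ker ε) :=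
      Module.Finite.iff_fg.mpr (IsNoetherian.noetherian _)
    obtain ⟨n1, d0, hd0⟩ := exists_free_cover (LinearMap.ker ε)
    haveI : IsNoetherian (ZG G) (Fin n1 → ZG G) := isNoetherian_of_tower ℤ inferInstance
    haveI : Module.Finite (ZG G) (LinearMap.ker d0) :=
      Module.Finite.iff_fg.mpr (IsNoetherian.noetherian _)
    obtain ⟨n2, d1, hd1⟩ := exists_free_cover (LinearMap.ker d0)
    exact ⟨_, ⟨⟨1, n1, n2, d1, d0, ε, hsurj, hd0, hd1⟩, rfl⟩⟩
  -- ### Part 2: the lower bound `1 ≤ z` for `z ∈ mu2Set G`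
  have hlb : ∀ z ∈ mu2Set G, (1 : ℤ) ≤ z := by
    rintro z ⟨F, rfl⟩
    set n := Module.finrank ℤ (ZG G) with hndef
    have hn : 0 < n := Module.finrank_pos
    have hF : ∀ f : ℕ, Module.finrank ℤ (Fin f → ZG G) = f * n := by
      intro f
      simp [Module.finrank_pi_fintype, hndef]
    set εz := zmap F.ε.toAddMonoidHom with hεz
    set d0z := zmap F.d0.toAddMonoidHom with hd0z
    set d1z := zmap F.d1.toAddMonoidHom with hd1z
    -- kernels and ranges agree with the ZG-level ones
    have hker0 : LinearMap.range d0z = LinearMap.ker εz := by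
      ext x
      have : x ∈ LinearMap.range F.d0 ↔ x ∈ LinearMap.ker F.ε := by rw [F.exact0]
      simpa [hεz, hd0z, zmap, LinearMap.mem_range, LinearMap.mem_ker] using this
    have hker1 : LinearMap.range d1z = LinearMap.ker d0z := by
      ext x
      have : x ∈ LinearMap.range F.d1 ↔ x ∈ LinearMap.ker F.d0 := by rw [F.exact1]
      simpa [hd1z, hd0z, zmap, LinearMap.mem_range, LinearMap.mem_ker] using this
    -- rank computations
    have e0 : F.f0 * n = 1 + Module.finrank ℤ (LinearMap.ker εz) := by
      have := zRankNullity εz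
      rw [LinearMap.range_eq_top.2 (show Function.Surjective εz from F.surj),
        finrank_top ℤ (TrivInt G)] at this
      have h1 : Module.finrank ℤ (TrivInt G) = 1 := Module.finrank_self ℤ
      rw [← hF F.f0, ← this, h1]
    have e1 : F.f1 * n = Module.finrank ℤ (LinearMap.ker εz)
        + Module.finrank ℤ (LinearMap.ker d0z) := by
      have := zRankNullity d0z
      rw [hker0] at this
      rw [← hF F.f1, ← this]
    have e2 : Module.finrank ℤ (LinearMap.ker d0z) ≤ F.f2 * n := by
      have := zRankNullity d1z
      rw [hker1] at this
      rw [← hF F.f2, ← this]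
      exact Nat.le_add_right _ _
    -- conclude
    have h0 : ((F.f0 : ℤ)) * n = 1 + (Module.finrank ℤ (LinearMap.ker εz) : ℤ) := by
      exact_mod_cast e0
    have h1 : ((F.f1 : ℤ)) * n = (Module.finrank ℤ (LinearMap.ker εz) : ℤ)
        + (Module.finrank ℤ (LinearMap.ker d0z) : ℤ) := by
      exact_mod_cast e1
    have h2 : (Module.finrank ℤ (LinearMap.ker d0z) : ℤ) ≤ (F.f2 : ℤ) * n := by
      exact_mod_cast e2
    have hexp : ((F.f2 : ℤ) - F.f1 + F.f0) * n
        = (F.f2 : ℤ) * n - (F.f1 : ℤ) * n + (F.f0 : ℤ) * n := by ring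
    have hmul : (1 : ℤ) ≤ ((F.f2 : ℤ) - F.f1 + F.f0) * n := by
      rw [hexp]; linarith
    have hn' : (0 : ℤ) < n := by exact_mod_cast hn
    by_contra hcon
    push_neg at hcon
    have hle : ((F.f2 : ℤ) - F.f1 + F.f0) ≤ 0 := by
      have := Int.lt_iff_add_one_le.mp hcon
      simpa [AlgTwoComplex.mu2] using this
    have : ((F.f2 : ℤ) - F.f1 + F.f0) * n ≤ 0 :=
      mul_nonpos_of_nonpos_of_nonneg hle (le_of_lt hn')
    linarith
  have hbdd : BddBelow (mu2Set G) := ⟨1, fun z hz => hlb z hz⟩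
  refine ⟨hne, hbdd, ?_⟩
  obtain ⟨F, hF⟩ := Int.csInf_mem hne hbdd
  exact ⟨F, hF⟩
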